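/- Let (E,d) and (E',d') be metric spaces and endow E×E' with the product distance D((x,s),(y,t)) = (d(x,y)² + d'(s,t)²)^{1/2}. If d² and d'² are negative definite kernels, then D^{2H} is a negative definite kernel on E×E' for every 0 ≤ H ≤ 1. -/

import Mathlib

open MeasureTheory ProbabilityTheory Real BigOperators

noncomputable def Wsq (μ ν : MeasureTheory.Measure ℝ) : ℝ :=
  sInf { c : ℝ | ∃ m : MeasureTheory.Measure (ℝ × ℝ),
    m.map Prod.fst = μ ∧ m.map Prod.snd = ν ∧ c = ∫ p, (p.1 - p.2) ^ 2 ∂m }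

/-- Quadratic Wasserstein distance. -/
noncomputable def W2 (μ ν : MeasureTheory.Measure ℝ) : ℝ := Real.sqrt (Wsq μ ν)

/-- Finite second moment. -/
def FiniteSecondMoment (μ : MeasureTheory.Measure ℝ) : Prop :=
  MeasureTheory.Integrable (fun x => x ^ 2) μ


section Aux
open BigOperators Finset MeasureTheory Set Real

/-- sum-level PSD kernel -/
def PSDk {n : ℕ} (M : Fin n → Fin n → ℝ) : Prop :=
  ∀ c : Fin n → ℝ, 0 ≤ ∑ i, ∑ j, c i * c j * M i j

lemma psd_gram {n : ℕ} {M : Fin n → Fin n → ℝ} (hsym : ∀ i j, M i j = M j i)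
    (hpsd : PSDk M) : ∃ B : Fin n → Fin n → ℝ, ∀ i j, M i j = ∑ k, B k i * B k j := by
  classical
  set A : Matrix (Fin n) (Fin n) ℝ := Matrix.of M with hA
  have hps : A.PosSemidef := by
    refine Matrix.posSemidef_iff_dotProduct_mulVec.mpr ⟨?_, ?_⟩
    · ext i j
      simp [Matrix.conjTranspose, A, hsym i j]
    · intro x
      have := hpsd x
      simp only [dotProduct, Matrix.mulVec, star_trivial]
      calc (0:ℝ) ≤ ∑ i, ∑ j, x i * x j * M i j := this
        _ = ∑ i, x i * ∑ j, M i j * x j := by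
            rw [Finset.sum_congr rfl]
            intro i _
            rw [Finset.mul_sum]
            exact Finset.sum_congr rfl fun j _ => by ring
  obtain ⟨B, hB⟩ : ∃ B : Matrix (Fin n) (Fin n) ℝ, A = star B * B := by
    open scoped MatrixOrder in exact CStarAlgebra.nonneg_iff_eq_star_mul_self.mp hps.nonneg
  refine ⟨fun k i => B k i, fun i j => ?_⟩
  have := congrFun (congrFun hB i) j
  simpa [Matrix.mul_apply, Matrix.conjTranspose_apply, A] using this

lemma psd_mul {n : ℕ} {M N : Fin n → Fin n → ℝ} (hM : PSDk M)
    (hsymN : ∀ i j, N i j = N j i) (hN : PSDk N) :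
    PSDk (fun i j => M i j * N i j) := by
  obtain ⟨B, hB⟩ := psd_gram hsymN hN
  intro c
  have step1 : ∑ i, ∑ j, c i * c j * (M i j * N i j)
      = ∑ i, ∑ j, ∑ k, (c i * B k i) * (c j * B k j) * M i j := by
    refine Finset.sum_congr rfl fun i _ => Finset.sum_congr rfl fun j _ => ?_
    rw [hB i j, Finset.mul_sum, Finset.mul_sum]
    exact Finset.sum_congr rfl fun k _ => by ring
  rw [step1, Finset.sum_congr rfl fun i (_ : i ∈ Finset.univ) => Finset.sum_comm,
    Finset.sum_comm]
  exact Finset.sum_nonneg fun k _ => hM _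

lemma psd_pow {n : ℕ} {M : Fin n → Fin n → ℝ} (hsym : ∀ i j, M i j = M j i)
    (hM : PSDk M) (k : ℕ) : PSDk (fun i j => M i j ^ k) := by
  induction k with
  | zero =>
      intro c
      simp only [pow_zero, mul_one]
      have : ∑ i, ∑ j, c i * c j = (∑ i, c i) ^ 2 := by
        rw [sq, Finset.sum_mul_sum]
      rw [this]; positivity
  | succ k ih =>
      have := psd_mul ih hsym hM
      intro c
      have h2 := this c
      simpa [pow_succ] using h2

lemma psd_exp {n : ℕ} {M : Fin n → Fin n → ℝ} (hsym : ∀ i j, M i j = M j i)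
    (hM : PSDk M) : PSDk (fun i j => Real.exp (M i j)) := by
  intro c
  have hexp : ∀ i j : Fin n, c i * c j * Real.exp (M i j)
      = ∑' k : ℕ, c i * c j * (M i j ^ k / k.factorial) := by
    intro i j
    rw [Real.exp_eq_exp_ℝ, NormedSpace.exp_eq_tsum_div, ← tsum_mul_left]
  have hsumm : ∀ i j : Fin n, Summable (fun k : ℕ => c i * c j * (M i j ^ k / k.factorial)) :=
    fun i j => (Real.summable_pow_div_factorial (M i j)).mul_left _
  calc (0:ℝ) ≤ ∑' k : ℕ, ∑ i, ∑ j, c i * c j * (M i j ^ k / k.factorial) := by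
        refine tsum_nonneg fun k => ?_
        have h1 : ∑ i, ∑ j, c i * c j * (M i j ^ k / k.factorial)
            = (k.factorial : ℝ)⁻¹ * ∑ i, ∑ j, c i * c j * M i j ^ k := by
          rw [Finset.mul_sum]
          refine Finset.sum_congr rfl fun i _ => ?_
          rw [Finset.mul_sum]
          exact Finset.sum_congr rfl fun j _ => by ring
        rw [h1]
        have := psd_pow hsym hM k c
        positivity
    _ = ∑ i, ∑ j, c i * c j * Real.exp (M i j) := by
        rw [Summable.tsum_finsetSum (fun i _ => summable_sum fun j _ => hsumm i j)]
        refine Finset.sum_congr rfl fun i _ => ?_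
        rw [Summable.tsum_finsetSum (fun j _ => hsumm i j)]
        exact Finset.sum_congr rfl fun j _ => (hexp i j).symm

/-- Schoenberg: conditionally negative definite + zero diagonal implies exp(-λK) PSD. -/
lemma negdef_exp {n : ℕ} (i0 : Fin n) {K : Fin n → Fin n → ℝ}
    (hsym : ∀ i j, K i j = K j i) (hdiag : ∀ i, K i i = 0)
    (hneg : ∀ c : Fin n → ℝ, ∑ i, c i = 0 → ∑ i, ∑ j, c i * c j * K i j ≤ 0)
    {l : ℝ} (hl : 0 ≤ l) :
    PSDk (fun i j => Real.exp (-(l * K i j))) := by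
  classical
  set φ : Fin n → Fin n → ℝ := fun i j => K i i0 + K j i0 - K i j with hφ
  have hφsym : ∀ i j, φ i j = φ j i := by
    intro i j; simp only [φ, hsym i j]; ring
  have hφpsd : PSDk φ := by
    intro c
    set s : ℝ := ∑ i, c i with hs
    set S : ℝ := ∑ i, c i * K i i0 with hS
    set c' : Fin n → ℝ := fun i => c i - s * (if i = i0 then 1 else 0) with hc'
    have hsum0 : ∑ i, c' i = 0 := by
      simp [c', Finset.sum_sub_distrib, ← Finset.mul_sum, Finset.sum_ite_eq']
      exact sub_self _
    have hKneg := hneg c' hsum0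
    have T1 : ∑ i, ∑ j, (if i = i0 then c j * K i j else 0) = S := by
      rw [Finset.sum_comm]
      have : ∀ j, ∑ i, (if i = i0 then c j * K i j else 0) = c j * K i0 j := by
        intro j
        rw [Finset.sum_ite_eq' Finset.univ i0 (fun i => c j * K i j)]
        simp
      rw [Finset.sum_congr rfl fun j _ => this j]
      exact Finset.sum_congr rfl fun j _ => by rw [hsym i0 j]
    have T2 : ∑ i, ∑ j, (if j = i0 then c i * K i j else 0) = S := by
      refine Finset.sum_congr rfl fun i _ => ?_
      rw [Finset.sum_ite_eq' Finset.univ i0 (fun j => c i * K i j)]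
      simp
    have T3 : ∑ i, ∑ j, (if i = i0 then (if j = i0 then K i j else 0) else 0) = 0 := by
      have : ∀ i, ∑ j, (if i = i0 then (if j = i0 then K i j else 0) else 0)
          = (if i = i0 then K i i0 else 0) := by
        intro i
        split_ifs with h
        · rw [Finset.sum_ite_eq' Finset.univ i0 (fun j => K i j)]; simp
        · simp
      rw [Finset.sum_congr rfl fun i _ => this i,
        Finset.sum_ite_eq' Finset.univ i0 (fun i => K i i0)]
      simp [hdiag i0]
    have hexpand : ∑ i, ∑ j, c' i * c' j * K i j
        = ∑ i, ∑ j, c i * c j * K i j - 2 * s * S := by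
      have h1 : ∀ i j, c' i * c' j * K i j
          = c i * c j * K i j
            - s * (if i = i0 then c j * K i j else 0)
            - s * (if j = i0 then c i * K i j else 0)
            + (s * s) * (if i = i0 then (if j = i0 then K i j else 0) else 0) := by
        intro i j
        simp only [c']
        split_ifs <;> ring
      calc ∑ i, ∑ j, c' i * c' j * K i j
          = ∑ i, ∑ j, (c i * c j * K i j
            - s * (if i = i0 then c j * K i j else 0)
            - s * (if j = i0 then c i * K i j else 0)
            + (s * s) * (if i = i0 then (if j = i0 then K i j else 0) else 0)) := by
            exact Finset.sum_congr rfl fun i _ => Finset.sum_congr rfl fun j _ => h1 i j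
        _ = ∑ i, ∑ j, c i * c j * K i j
            - s * ∑ i, ∑ j, (if i = i0 then c j * K i j else 0)
            - s * ∑ i, ∑ j, (if j = i0 then c i * K i j else 0)
            + (s * s) * ∑ i, ∑ j, (if i = i0 then (if j = i0 then K i j else 0) else 0) := by
            simp only [Finset.sum_add_distrib, Finset.sum_sub_distrib, ← Finset.mul_sum]
        _ = ∑ i, ∑ j, c i * c j * K i j - 2 * s * S := by
            rw [T1, T2, T3]; ring
    have hφexpand : ∑ i, ∑ j, c i * c j * φ i j
        = 2 * s * S - ∑ i, ∑ j, c i * c j * K i j := by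
      have h1 : ∀ i j, c i * c j * φ i j
          = c j * (c i * K i i0) + c i * (c j * K j i0) - c i * c j * K i j := by
        intro i j; simp only [φ]; ring
      have A1 : ∑ i, ∑ j, c j * (c i * K i i0) = s * S := by
        have : ∀ i, ∑ j, c j * (c i * K i i0) = s * (c i * K i i0) := by
          intro i; rw [← Finset.sum_mul]
        rw [Finset.sum_congr rfl fun i _ => this i, ← Finset.mul_sum]
      have A2 : ∑ i, ∑ j, c i * (c j * K j i0) = s * S := by
        have : ∀ i, ∑ j, c i * (c j * K j i0) = c i * S := by
          intro i; rw [← Finset.mul_sum]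
        rw [Finset.sum_congr rfl fun i _ => this i, ← Finset.sum_mul]
      calc ∑ i, ∑ j, c i * c j * φ i j
          = ∑ i, ∑ j, (c j * (c i * K i i0) + c i * (c j * K j i0) - c i * c j * K i j) :=
            Finset.sum_congr rfl fun i _ => Finset.sum_congr rfl fun j _ => h1 i j
        _ = ∑ i, ∑ j, c j * (c i * K i i0) + ∑ i, ∑ j, c i * (c j * K j i0)
            - ∑ i, ∑ j, c i * c j * K i j := by
            simp only [Finset.sum_add_distrib, Finset.sum_sub_distrib]
        _ = 2 * s * S - ∑ i, ∑ j, c i * c j * K i j := by rw [A1, A2]; ring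
    rw [hφexpand]
    rw [hexpand] at hKneg
    linarith
  -- now exp(-(l*K i j)) = exp(l*φ i j) * (d i * d j), d i = exp(-(l * K i i0))
  intro c
  set d : Fin n → ℝ := fun i => Real.exp (-(l * K i i0)) with hd
  have hlφpsd : PSDk (fun i j => l * φ i j) := by
    intro c'
    have := hφpsd c'
    have heq : ∑ i, ∑ j, c' i * c' j * (l * φ i j)
        = l * ∑ i, ∑ j, c' i * c' j * φ i j := by
      rw [Finset.mul_sum]
      exact Finset.sum_congr rfl fun i _ => by
        rw [Finset.mul_sum]; exact Finset.sum_congr rfl fun j _ => by ring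
    rw [heq]
    positivity
  have hExp := psd_exp (fun i j => by simp only [hφsym i j]) hlφpsd (fun i => c i * d i)
  have key : ∀ i j, (c i * d i) * (c j * d j) * Real.exp (l * φ i j)
      = c i * c j * Real.exp (-(l * K i j)) := by
    intro i j
    have : Real.exp (-(l * K i j)) = Real.exp (l * φ i j) * (d i * d j) := by
      rw [hd, ← Real.exp_add, ← Real.exp_add]
      congr 1
      simp only [φ]
      ring
    rw [this]; ring
  calc (0:ℝ) ≤ ∑ i, ∑ j, (c i * d i) * (c j * d j) * Real.exp (l * φ i j) := hExp
    _ = ∑ i, ∑ j, c i * c j * Real.exp (-(l * K i j)) :=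
        Finset.sum_congr rfl fun i _ => Finset.sum_congr rfl fun j _ => key i j

noncomputable def gH (H : ℝ) (t : ℝ) (l : ℝ) : ℝ := (1 - Real.exp (-(t * l))) * l ^ (-1 - H)

lemma gH_nonneg {H t l : ℝ} (ht : 0 ≤ t) (hl : 0 < l) : 0 ≤ gH H t l := by
  apply mul_nonneg
  · simp only [sub_nonneg]
    exact Real.exp_le_one_iff.mpr (by nlinarith)
  · positivity

lemma gH_contOn (H t : ℝ) : ContinuousOn (gH H t) (Ioi 0) := by
  apply ContinuousOn.mul
  · exact (continuous_const.sub ((continuous_const.mul continuous_id').neg.rexp)).continuousOn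
  · exact ContinuousOn.rpow_const continuousOn_id fun x hx => Or.inl (ne_of_gt hx)

lemma gH_integrableOn {H : ℝ} (h0 : 0 < H) (h1 : H < 1) {t : ℝ} (ht : 0 ≤ t) :
    IntegrableOn (gH H t) (Ioi 0) := by
  have hmeas : AEStronglyMeasurable (gH H t) (volume.restrict (Ioi 0)) :=
    (gH_contOn H t).aestronglyMeasurable measurableSet_Ioi
  rw [← Set.Ioc_union_Ioi_eq_Ioi (le_of_lt one_pos)]
  apply IntegrableOn.union
  · -- on Ioc 0 1, dominated by t * l ^ (-H)
    have hint : IntegrableOn (fun l : ℝ => t * l ^ (-H)) (Ioc 0 1) := by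
      apply Integrable.const_mul
      have := intervalIntegral.intervalIntegrable_rpow' (a := 0) (b := 1) (r := -H) (by linarith)
      rwa [intervalIntegrable_iff_integrableOn_Ioc_of_le (le_of_lt one_pos)] at this
    apply Integrable.mono hint (hmeas.mono_set (Set.Ioc_subset_Ioi_self.trans subset_rfl))
    rw [ae_restrict_iff' measurableSet_Ioc]
    filter_upwards with l hl
    rcases hl with ⟨hl0, hl1⟩
    rw [Real.norm_eq_abs, Real.norm_eq_abs, abs_of_nonneg (gH_nonneg ht hl0)]
    have h2 : 1 - Real.exp (-(t * l)) ≤ t * l := by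
      have := Real.add_one_le_exp (-(t * l)); linarith
    have h3 : (0:ℝ) ≤ l ^ (-1 - H) := le_of_lt (Real.rpow_pos_of_pos hl0 _)
    have h4 : gH H t l ≤ t * l * l ^ (-1 - H) := mul_le_mul_of_nonneg_right h2 h3
    have h5 : t * l * l ^ (-1 - H) = t * l ^ (-H) := by
      have h6 := (Real.rpow_add hl0 1 (-1-H)).symm
      rw [Real.rpow_one] at h6
      rw [mul_assoc, h6, show (1:ℝ) + (-1 - H) = -H by ring]
    refine le_trans (h4.trans (le_of_eq h5)) (le_abs_self _)
  · -- on Ioi 1, dominated by l ^ (-1 - H)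
    have hint : IntegrableOn (fun l : ℝ => l ^ (-1 - H)) (Ioi 1) :=
      integrableOn_Ioi_rpow_of_lt (by linarith) one_pos
    apply Integrable.mono hint (hmeas.mono_set (Set.Ioi_subset_Ioi (le_of_lt one_pos)))
    rw [ae_restrict_iff' measurableSet_Ioi]
    filter_upwards with l hl
    have hl0 : (0:ℝ) < l := lt_trans one_pos hl
    rw [Real.norm_eq_abs, Real.norm_eq_abs, abs_of_nonneg (gH_nonneg ht hl0)]
    have h2 : 1 - Real.exp (-(t * l)) ≤ 1 := by
      have := Real.exp_pos (-(t * l)); linarith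
    have h3 : (0:ℝ) ≤ l ^ (-1 - H) := le_of_lt (Real.rpow_pos_of_pos hl0 _)
    calc gH H t l ≤ 1 * l ^ (-1 - H) := mul_le_mul_of_nonneg_right h2 h3
      _ = l ^ (-1-H) := one_mul _
      _ ≤ |l ^ (-1-H)| := le_abs_self _

noncomputable def CH (H : ℝ) : ℝ := ∫ l in Ioi (0:ℝ), gH H 1 l

lemma CH_pos {H : ℝ} (h0 : 0 < H) (h1 : H < 1) : 0 < CH H := by
  rw [CH, setIntegral_pos_iff_support_of_nonneg_ae]
  · have hsub : Ioi (0:ℝ) ⊆ Function.support (gH H 1) ∩ Ioi 0 := by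
      intro l hl
      refine ⟨?_, hl⟩
      have hl0 : (0:ℝ) < l := hl
      have e1 : 1 - Real.exp (-(1 * l)) > 0 := by
        simp only [one_mul, sub_pos]
        exact Real.exp_lt_one_iff.mpr (by linarith)
      have e2 : (0:ℝ) < l ^ (-1-H) := Real.rpow_pos_of_pos hl0 _
      exact ne_of_gt (mul_pos e1 e2)
    calc (0:ENNReal) < volume (Ioi (0:ℝ)) := by simp
      _ ≤ volume (Function.support (gH H 1) ∩ Ioi 0) := measure_mono hsub
  · filter_upwards [ae_restrict_mem measurableSet_Ioi] with l hl
    exact gH_nonneg zero_le_one hl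
  · exact gH_integrableOn h0 h1 zero_le_one

lemma gH_integral_eq {H : ℝ} (h0 : 0 < H) (h1 : H < 1) {t : ℝ} (ht : 0 ≤ t) :
    ∫ l in Ioi (0:ℝ), gH H t l = t ^ H * CH H := by
  rcases eq_or_lt_of_le ht with h | h
  · rw [← h, Real.zero_rpow (ne_of_gt h0), zero_mul]
    have : ∀ l ∈ Ioi (0:ℝ), gH H 0 l = 0 := by
      intro l _; simp [gH]
    rw [setIntegral_congr_fun measurableSet_Ioi this]
    simp
  · have key : ∀ l ∈ Ioi (0:ℝ), gH H t l = t ^ (1 + H) * gH H 1 (t * l) := by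
      intro l hl
      have hl0 : (0:ℝ) < l := hl
      simp only [gH, one_mul]
      rw [Real.mul_rpow (le_of_lt h) (le_of_lt hl0)]
      rw [show t ^ (1+H) * ((1 - Real.exp (-(t*l))) * (t ^ (-1-H) * l ^ (-1-H)))
          = (1 - Real.exp (-(t*l))) * ((t ^ (1+H) * t ^ (-1-H)) * l ^ (-1-H)) by ring]
      rw [← Real.rpow_add h]
      norm_num
    rw [setIntegral_congr_fun measurableSet_Ioi key]
    rw [integral_const_mul]
    have hcomp := MeasureTheory.integral_comp_mul_left_Ioi (gH H 1) 0 h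
    rw [mul_zero] at hcomp
    rw [hcomp, smul_eq_mul, ← CH]
    rw [show (1:ℝ) + H = H + 1 by ring, Real.rpow_add h, Real.rpow_one]
    field_simp




end Aux

open Set in
/-- If d² and d'² are negative definite, then the product distance to the power 2H
is negative definite on E × E' for 0 ≤ H ≤ 1. -/
theorem product_dist_pow_negDef {E E' : Type*} [MetricSpace E] [MetricSpace E']
    (hd : ∀ (n : ℕ) (x : Fin n → E) (c : Fin n → ℝ), ∑ i, c i = 0 →
      ∑ i, ∑ j, c i * c j * (dist (x i) (x j)) ^ 2 ≤ 0)
    (hd' : ∀ (n : ℕ) (x : Fin n → E') (c : Fin n → ℝ), ∑ i, c i = 0 →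
      ∑ i, ∑ j, c i * c j * (dist (x i) (x j)) ^ 2 ≤ 0)
    (H : ℝ) (h0 : 0 ≤ H) (h1 : H ≤ 1) :
    ∀ (n : ℕ) (z : Fin n → E × E') (c : Fin n → ℝ), ∑ i, c i = 0 →
      ∑ i, ∑ j, c i * c j *
        (Real.sqrt ((dist (z i).1 (z j).1) ^ 2 + (dist (z i).2 (z j).2) ^ 2))
          ^ (2 * H) ≤ 0 := by
  intro n z c hc
  set K : Fin n → Fin n → ℝ :=
    fun i j => (dist (z i).1 (z j).1) ^ 2 + (dist (z i).2 (z j).2) ^ 2 with hK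
  have hKnonneg : ∀ i j, 0 ≤ K i j := fun i j => by positivity
  have hKsym : ∀ i j, K i j = K j i := fun i j => by simp [K, dist_comm]
  have hKdiag : ∀ i, K i i = 0 := fun i => by simp [K]
  have hKneg : ∀ c' : Fin n → ℝ, ∑ i, c' i = 0 → ∑ i, ∑ j, c' i * c' j * K i j ≤ 0 := by
    intro c' hc'
    have h1 := hd n (fun i => (z i).1) c' hc'
    have h2 := hd' n (fun i => (z i).2) c' hc'
    have : ∑ i, ∑ j, c' i * c' j * K i j
        = (∑ i, ∑ j, c' i * c' j * (dist (z i).1 (z j).1) ^ 2)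
          + ∑ i, ∑ j, c' i * c' j * (dist (z i).2 (z j).2) ^ 2 := by
      rw [← Finset.sum_add_distrib]
      refine Finset.sum_congr rfl fun i _ => ?_
      rw [← Finset.sum_add_distrib]
      exact Finset.sum_congr rfl fun j _ => by simp only [K]; ring
    rw [this]
    linarith
  -- rewrite sqrt^2H as K^H
  have hrw : ∀ i j, (Real.sqrt (K i j)) ^ (2 * H) = K i j ^ H := by
    intro i j
    rw [Real.sqrt_eq_rpow, ← Real.rpow_mul (hKnonneg i j),
      show 1/2*(2*H) = H by ring]
  have hgoal : ∑ i, ∑ j, c i * c j *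
        (Real.sqrt ((dist (z i).1 (z j).1) ^ 2 + (dist (z i).2 (z j).2) ^ 2)) ^ (2 * H)
      = ∑ i, ∑ j, c i * c j * K i j ^ H :=
    Finset.sum_congr rfl fun i _ => Finset.sum_congr rfl fun j _ => by
      have he : Real.sqrt ((dist (z i).1 (z j).1) ^ 2 + (dist (z i).2 (z j).2) ^ 2)
          = Real.sqrt (K i j) := rfl
      rw [he, hrw i j]
  rw [hgoal]
  -- trivial cases
  rcases eq_or_lt_of_le h0 with hH0 | hH0
  · -- H = 0
    have : ∀ i j : Fin n, K i j ^ H = 1 := fun i j => by rw [← hH0, Real.rpow_zero]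
    calc ∑ i, ∑ j, c i * c j * K i j ^ H = ∑ i, ∑ j, c i * c j := by
          exact Finset.sum_congr rfl fun i _ => Finset.sum_congr rfl fun j _ => by
            rw [this i j, mul_one]
      _ = (∑ i, c i) * (∑ j, c j) := by rw [Finset.sum_mul_sum]
      _ ≤ 0 := by rw [hc]; simp
  rcases eq_or_lt_of_le h1 with hH1 | hH1
  · -- H = 1
    have : ∀ i j : Fin n, K i j ^ H = K i j := fun i j => by rw [hH1, Real.rpow_one]
    rw [Finset.sum_congr rfl fun i _ => Finset.sum_congr rfl fun j _ => by rw [this i j]]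
    exact hKneg c hc
  -- 0 < H < 1
  rcases Nat.eq_zero_or_pos n with hn | hn
  · subst hn; simp
  have i0 : Fin n := ⟨0, hn⟩
  have hCpos := CH_pos hH0 hH1
  have hrep : ∀ i j, K i j ^ H = (CH H)⁻¹ * ∫ l in Ioi (0:ℝ), gH H (K i j) l := by
    intro i j
    rw [gH_integral_eq hH0 hH1 (hKnonneg i j)]
    field_simp
  have hint : ∀ i j : Fin n, Integrable (fun l => c i * c j * gH H (K i j) l)
      (volume.restrict (Ioi (0:ℝ))) :=
    fun i j => (gH_integrableOn hH0 hH1 (hKnonneg i j)).const_mul _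
  have hswap : ∑ i, ∑ j, c i * c j * K i j ^ H
      = (CH H)⁻¹ * ∫ l in Ioi (0:ℝ), ∑ i, ∑ j, c i * c j * gH H (K i j) l := by
    rw [integral_finset_sum Finset.univ
      (fun i _ => integrable_finset_sum Finset.univ (fun j _ => hint i j))]
    rw [Finset.mul_sum]
    refine Finset.sum_congr rfl fun i _ => ?_
    rw [integral_finset_sum Finset.univ (fun j _ => hint i j), Finset.mul_sum]
    refine Finset.sum_congr rfl fun j _ => ?_
    rw [hrep i j, integral_const_mul]
    ring
  rw [hswap]
  have hptwise : ∀ l ∈ Ioi (0:ℝ), ∑ i, ∑ j, c i * c j * gH H (K i j) l ≤ 0 := by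
    intro l hl
    have hl0 : (0:ℝ) < l := hl
    have hpsd' : 0 ≤ ∑ i, ∑ j, c i * c j * Real.exp (-(l * K i j)) :=
      negdef_exp i0 hKsym hKdiag hKneg (le_of_lt hl0) c
    have e1 : ∀ i j, c i * c j * gH H (K i j) l
        = l ^ (-1-H) * (c i * c j)
          - l ^ (-1-H) * (c i * c j * Real.exp (-(l * K i j))) := by
      intro i j; simp only [gH]; rw [mul_comm (K i j) l]; ring
    have e2 : ∑ i, ∑ j, c i * c j * gH H (K i j) l
        = l ^ (-1-H) * (∑ i, ∑ j, c i * c j)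
          - l ^ (-1-H) * ∑ i, ∑ j, c i * c j * Real.exp (-(l * K i j)) := by
      simp only [e1, Finset.sum_sub_distrib, ← Finset.mul_sum]
    have e3 : ∑ i, ∑ j, c i * c j = 0 := by
      calc ∑ i, ∑ j, c i * c j = (∑ i, c i) * (∑ j, c j) := by rw [Finset.sum_mul_sum]
        _ = 0 := by rw [hc, zero_mul]
    rw [e2, e3, mul_zero, zero_sub]
    have hpw : (0:ℝ) ≤ l ^ (-1-H) := le_of_lt (Real.rpow_pos_of_pos hl0 _)
    have := mul_nonneg hpw hpsd'
    linarith
  have hI : ∫ l in Ioi (0:ℝ), ∑ i, ∑ j, c i * c j * gH H (K i j) l ≤ 0 :=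
    setIntegral_nonpos measurableSet_Ioi hptwise
  exact mul_nonpos_of_nonneg_of_nonpos (inv_nonneg.mpr (le_of_lt hCpos)) hI
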